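/- Let T : ℓ¹ → ℓ¹ be a surjective linear isometry and let x, y ∈ ℓ¹ have disjoint supports. Then Tx and Ty have disjoint supports. -/
import Mathlib

open scoped ENNReal

private lemma lp1_norm_eq (f : lp (fun _ : ℕ => ℝ) 1) : ‖f‖ = ∑' i, |f i| := by
  have := lp.norm_eq_tsum_rpow (p := 1) (by norm_num) f
  simpa [Real.norm_eq_abs] using this

private lemma lp1_summable (f : lp (fun _ : ℕ => ℝ) 1) :
    Summable fun i => |f i| := by
  have := (lp.memℓp f).summable (p := 1) (by norm_num)
  simpa [Real.norm_eq_abs] using this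

/-- A surjective linear isometry of `ℓ¹` maps disjointly supported vectors to
disjointly supported vectors. -/
theorem ell1_isometry_disjoint_support
    (T : lp (fun _ : ℕ => ℝ) 1 →ₗ[ℝ] lp (fun _ : ℕ => ℝ) 1)
    (hiso : Isometry T) (hsurj : Function.Surjective T)
    (x y : lp (fun _ : ℕ => ℝ) 1)
    (hxy : Disjoint {i | x i ≠ 0} {i | y i ≠ 0}) :
    Disjoint {i | (T x) i ≠ 0} {i | (T y) i ≠ 0} := by
  have hnorm : ∀ z : lp (fun _ : ℕ => ℝ) 1, ‖T z‖ = ‖z‖ :=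
    hiso.norm_map_of_map_zero (map_zero T)
  -- key identity: for disjointly supported x, y, ‖x+y‖ + ‖x-y‖ = 2‖x‖ + 2‖y‖
  have hx : ‖x + y‖ + ‖x - y‖ = 2 * ‖x‖ + 2 * ‖y‖ := by
    rw [lp1_norm_eq, lp1_norm_eq, lp1_norm_eq, lp1_norm_eq]
    have hpt : ∀ i, |(x + y) i| + |(x - y) i| = 2 * |x i| + 2 * |y i| := by
      intro i
      have h0 : x i = 0 ∨ y i = 0 := by
        by_contra h
        push_neg at h
        exact Set.disjoint_left.mp hxy h.1 h.2
      have hadd : (x + y) i = x i + y i := by simp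
      have hsub : (x - y) i = x i - y i := by simp
      rcases h0 with h0 | h0 <;> rw [hadd, hsub, h0] <;> simp [abs_neg] <;> ring_nf <;>
        simp [abs_neg, two_mul]
    rw [← Summable.tsum_add (lp1_summable (x + y)) (lp1_summable (x - y)),
      ← tsum_mul_left, ← tsum_mul_left,
      ← Summable.tsum_add ((lp1_summable x).mul_left 2) ((lp1_summable y).mul_left 2)]
    exact tsum_congr hpt
  -- transfer to Tx, Ty
  have hT : ∑' i, (|(T x + T y) i| + |(T x - T y) i|) =
      ∑' i, (2 * |(T x) i| + 2 * |(T y) i|) := by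
    have h1 : ‖T x + T y‖ + ‖T x - T y‖ = 2 * ‖T x‖ + 2 * ‖T y‖ := by
      rw [← map_add, ← map_sub, hnorm, hnorm, hnorm, hnorm]; exact hx
    rw [lp1_norm_eq, lp1_norm_eq, lp1_norm_eq, lp1_norm_eq] at h1
    rw [Summable.tsum_add (lp1_summable (T x + T y)) (lp1_summable (T x - T y)),
      Summable.tsum_add ((lp1_summable (T x)).mul_left 2) ((lp1_summable (T y)).mul_left 2),
      tsum_mul_left, tsum_mul_left]
    exact h1
  -- pointwise inequality, equality of sums forces pointwise equality
  have hle : ∀ i, |(T x + T y) i| + |(T x - T y) i| ≤ 2 * |(T x) i| + 2 * |(T y) i| := by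
    intro i
    simp only [lp.coeFn_add, lp.coeFn_sub, Pi.add_apply, Pi.sub_apply]
    have := abs_add_le ((T x) i) ((T y) i)
    have := abs_sub ((T x) i) ((T y) i)
    cases abs_cases ((T x) i + (T y) i) <;> cases abs_cases ((T x) i - (T y) i) <;>
      cases abs_cases ((T x) i) <;> cases abs_cases ((T y) i) <;> linarith
  rw [Set.disjoint_left]
  rintro i (hix : (T x) i ≠ 0) (hiy : (T y) i ≠ 0)
  have hlt : |(T x + T y) i| + |(T x - T y) i| < 2 * |(T x) i| + 2 * |(T y) i| := by
    simp only [lp.coeFn_add, lp.coeFn_sub, Pi.add_apply, Pi.sub_apply]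
    have hax : 0 < |(T x) i| := abs_pos.mpr hix
    have hay : 0 < |(T y) i| := abs_pos.mpr hiy
    cases abs_cases ((T x) i + (T y) i) <;> cases abs_cases ((T x) i - (T y) i) <;>
      cases abs_cases ((T x) i) <;> cases abs_cases ((T y) i) <;> linarith
  have hsumm : Summable fun i => |(T x + T y) i| + |(T x - T y) i| :=
    (lp1_summable (T x + T y)).add (lp1_summable (T x - T y))
  have hsumm2 : Summable fun i => 2 * |(T x) i| + 2 * |(T y) i| :=
    ((lp1_summable (T x)).mul_left 2).add ((lp1_summable (T y)).mul_left 2)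
  exact absurd hT (ne_of_lt (Summable.tsum_lt_tsum hle hlt hsumm hsumm2))
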